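/- Let m1, m2 be positive integers with m2 even and g = gcd(m1,m2). Then the node set LS(m) = {x_i : i ∈ I(m)} equals the union over ρ = 0,…,g−1 of the sample sets {ℓ_{2ρ/m2}(lπ/(m1m2)) : 0 ≤ l < 2m1m2/g}, where ℓ_α(t) = (sin(m2 t)cos(m1 t − απ), sin(m2 t)sin(m1 t − απ), cos(m2 t)). In particular, if gcd(m1,m2) = 1 then LS(m) is the set of samples ℓ_0(lπ/(m1m2)), 0 ≤ l < 2m1m2. -/

import Mathlib

open Real

noncomputable def lissajous (m1 m2 : ℕ) (α : ℝ) (t : ℝ) : ℝ × ℝ × ℝ :=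
  (Real.sin (m2 * t) * Real.cos (m1 * t - α * π),
   Real.sin (m2 * t) * Real.sin (m1 * t - α * π),
   Real.cos (m2 * t))

/-- The index set I(m) as a finset. -/
def indexSet (m1 m2 : ℕ) : Finset (ℕ × ℕ) :=
  (Finset.range (m1 + 1) ×ˢ Finset.range (2 * m2)).filter
    (fun i => ((i.1 = 0 ∨ i.1 = m1) → i.2 < m2) ∧ Even (i.1 + i.2))

/-- The spherical Lissajous node corresponding to an index. -/
noncomputable def node (m1 m2 : ℕ) (i : ℕ × ℕ) : ℝ × ℝ × ℝ :=
  (Real.sin (i.1 * π / m1) * Real.cos (i.2 * π / m2),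
   Real.sin (i.1 * π / m1) * Real.sin (i.2 * π / m2),
   Real.cos (i.1 * π / m1))

noncomputable def V (m1 m2 : ℕ) (a b : ℤ) : ℝ × ℝ × ℝ :=
  (Real.sin (a * π / m1) * Real.cos (b * π / m2),
   Real.sin (a * π / m1) * Real.sin (b * π / m2),
   Real.cos (a * π / m1))

lemma angle_shift (m : ℕ) (hm : 0 < m) (a k : ℤ) :
    ((a + 2*(m:ℤ)*k : ℤ) : ℝ) * π / m = (a:ℝ) * π / m + (k:ℝ) * (2*π) := by
  have h : (m:ℝ) ≠ 0 := by positivity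
  push_cast
  field_simp

lemma V_congr (m1 m2 : ℕ) (hm1 : 0 < m1) (hm2 : 0 < m2) {a b a' b' : ℤ}
    (ha : (2*(m1:ℤ)) ∣ a - a') (hb : (2*(m2:ℤ)) ∣ b - b') :
    V m1 m2 a b = V m1 m2 a' b' := by
  obtain ⟨k, hk⟩ := ha
  obtain ⟨j, hj⟩ := hb
  have ha' : a = a' + 2*(m1:ℤ)*k := by linarith
  have hb' : b = b' + 2*(m2:ℤ)*j := by linarith
  subst ha' hb'
  unfold V
  rw [angle_shift m1 hm1, angle_shift m2 hm2,
    Real.sin_add_int_mul_two_pi, Real.cos_add_int_mul_two_pi,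
    Real.sin_add_int_mul_two_pi, Real.cos_add_int_mul_two_pi]

lemma V_flip (m1 m2 : ℕ) (hm1 : 0 < m1) (hm2 : 0 < m2) (a b : ℤ) :
    V m1 m2 (-a) (b + m2) = V m1 m2 a b := by
  have h1 : (m1:ℝ) ≠ 0 := by positivity
  have h2 : (m2:ℝ) ≠ 0 := by positivity
  have e1 : ((-a : ℤ) : ℝ) * π / m1 = -((a:ℝ) * π / m1) := by push_cast; ring
  have e2 : ((b + m2 : ℤ) : ℝ) * π / m2 = (b:ℝ) * π / m2 + π := by
    push_cast; field_simp
  unfold V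
  rw [e1, e2, Real.sin_neg, Real.cos_neg, Real.sin_add_pi, Real.cos_add_pi]
  ring_nf

lemma V_sin_zero (m1 m2 : ℕ) (hm1 : 0 < m1) {a : ℤ} (ha : a = 0 ∨ a = (m1:ℤ))
    (b b' : ℤ) : V m1 m2 a b = V m1 m2 a b' := by
  have h1 : (m1:ℝ) ≠ 0 := by positivity
  have hs : Real.sin ((a:ℝ) * π / m1) = 0 := by
    rcases ha with h | h
    · simp [h]
    · have : (a:ℝ) * π / m1 = π := by rw [h]; field_simp; norm_cast
      rw [this, Real.sin_pi]
  unfold V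
  rw [hs]
  simp

lemma node_eq_V (m1 m2 : ℕ) (i : ℕ × ℕ) :
    node m1 m2 i = V m1 m2 (i.1 : ℤ) (i.2 : ℤ) := by
  simp [node, V]

lemma lissajous_eq_V (m1 m2 : ℕ) (hm1 : 0 < m1) (hm2 : 0 < m2) (ρ l : ℕ) :
    lissajous m1 m2 (2 * (ρ:ℝ) / m2) ((l : ℝ) * π / (m1 * m2))
      = V m1 m2 (l : ℤ) ((l : ℤ) - 2*ρ) := by
  have h1 : (m1:ℝ) ≠ 0 := by positivity
  have h2 : (m2:ℝ) ≠ 0 := by positivity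
  have e1 : (m2:ℝ) * ((l : ℝ) * π / (m1 * m2)) = ((l:ℤ):ℝ) * π / m1 := by
    push_cast; field_simp
  have e2 : (m1:ℝ) * ((l : ℝ) * π / (m1 * m2)) - (2 * (ρ:ℝ) / m2) * π
      = (((l : ℤ) - 2*ρ : ℤ):ℝ) * π / m2 := by
    push_cast; field_simp
  unfold lissajous V
  rw [e1, e2]


theorem stmt9 (m1 m2 : ℕ) (hm1 : 0 < m1) (hm2 : 0 < m2) (heven : Even m2)
    (g : ℕ) (hg : g = Nat.gcd m1 m2) :
    ({x : ℝ × ℝ × ℝ | ∃ i ∈ indexSet m1 m2, x = node m1 m2 i} =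
      {x : ℝ × ℝ × ℝ | ∃ ρ < g, ∃ l < 2 * m1 * m2 / g,
        x = lissajous m1 m2 (2 * (ρ:ℝ) / m2) ((l : ℝ) * π / (m1 * m2))}) ∧
    (Nat.gcd m1 m2 = 1 →
      {x : ℝ × ℝ × ℝ | ∃ i ∈ indexSet m1 m2, x = node m1 m2 i} =
        {x : ℝ × ℝ × ℝ | ∃ l < 2 * m1 * m2,
          x = lissajous m1 m2 0 ((l : ℝ) * π / (m1 * m2))}) := by
  have hgpos : 0 < g := by
    rw [hg]; exact Nat.gcd_pos_of_pos_left _ hm1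
  have hgm1 : g ∣ m1 := hg ▸ Nat.gcd_dvd_left m1 m2
  have hgm2 : g ∣ m2 := hg ▸ Nat.gcd_dvd_right m1 m2
  set N : ℕ := 2 * m1 * m2 / g with hNdef
  have hN1 : N = 2 * m1 * (m2 / g) := by
    rw [hNdef, Nat.mul_div_assoc _ hgm2]
  have hN2 : N = 2 * m2 * (m1 / g) := by
    rw [hNdef]
    rw [show 2 * m1 * m2 = 2 * m2 * m1 by ring, Nat.mul_div_assoc _ hgm1]
  have hNpos : 0 < N := by
    rw [hN1]
    have : 0 < m2 / g := Nat.div_pos (Nat.le_of_dvd hm2 hgm2) hgpos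
    positivity
  have hdvd1 : (2*(m1:ℤ)) ∣ (N:ℤ) := ⟨(m2/g : ℕ), by rw [hN1]; push_cast; ring⟩
  have hdvd2 : (2*(m2:ℤ)) ∣ (N:ℤ) := ⟨(m1/g : ℕ), by rw [hN2]; push_cast; ring⟩
  have hm2even : (2:ℤ) ∣ (m2:ℤ) := by
    obtain ⟨c, hc⟩ := heven; exact ⟨c, by push_cast; omega⟩
  have hmain : {x : ℝ × ℝ × ℝ | ∃ i ∈ indexSet m1 m2, x = node m1 m2 i} =
      {x : ℝ × ℝ × ℝ | ∃ ρ < g, ∃ l < N,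
        x = lissajous m1 m2 (2 * (ρ:ℝ) / m2) ((l : ℝ) * π / (m1 * m2))} := by
    ext x
    simp only [Set.mem_setOf_eq]
    constructor
    · rintro ⟨⟨i1, i2⟩, hmem, rfl⟩
      simp only [indexSet, Finset.mem_filter, Finset.mem_product,
        Finset.mem_range] at hmem
      obtain ⟨⟨hi1, hi2⟩, hcond, hpar⟩ := hmem
      -- parity
      obtain ⟨c, hc⟩ := hpar
      set s : ℤ := (c:ℤ) - i2 with hs
      have hsub : (i1:ℤ) - i2 = 2*s := by rw [hs]; push_cast; omega
      set ρ : ℤ := s % g with hρ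
      have hρ0 : 0 ≤ ρ := Int.emod_nonneg s (by exact_mod_cast hgpos.ne')
      have hρlt : ρ < g := Int.emod_lt_of_pos s (by exact_mod_cast hgpos)
      set q : ℤ := -(s / g) with hq
      have hD : (i2:ℤ) + 2*ρ - i1 = 2*(g:ℤ)*q := by
        have := Int.emod_add_mul_ediv s g
        rw [hρ, hq]
        push_cast
        linarith [hsub, this]
      set A : ℤ := Nat.gcdA m1 m2 with hA
      set B : ℤ := Nat.gcdB m1 m2 with hB
      have bez : (g:ℤ) = m1*A + m2*B := by
        rw [hg, hA, hB]; exact_mod_cast Nat.gcd_eq_gcd_ab m1 m2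
      set l0 : ℤ := i1 + 2*m1*(A*q) with hl0def
      set l : ℕ := (l0 % N).toNat with hldef
      have hl0m : 0 ≤ l0 % N := Int.emod_nonneg l0 (by exact_mod_cast hNpos.ne')
      have hl0lt : l0 % N < N := Int.emod_lt_of_pos l0 (by exact_mod_cast hNpos)
      have hlcast : (l:ℤ) = l0 % N := Int.toNat_of_nonneg hl0m
      have hlltN : l < N := by
        have := hl0lt; rw [← hlcast] at this; exact_mod_cast this
      have hNl : (N:ℤ) ∣ l0 - (l:ℤ) := by
        rw [hlcast, Int.emod_def]; exact ⟨l0 / N, by ring⟩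
      refine ⟨ρ.toNat, by omega, l, hlltN, ?_⟩
      have hρcast : ((ρ.toNat : ℕ):ℤ) = ρ := Int.toNat_of_nonneg hρ0
      rw [lissajous_eq_V m1 m2 hm1 hm2, node_eq_V]
      apply V_congr m1 m2 hm1 hm2
      · -- 2*m1 ∣ i1 - l
        have h1 : (2*(m1:ℤ)) ∣ (i1:ℤ) - l0 := ⟨-(A*q), by rw [hl0def]; ring⟩
        have h2 : (2*(m1:ℤ)) ∣ l0 - l := dvd_trans hdvd1 hNl
        have := dvd_add h1 h2
        simpa using this
      · -- 2*m2 ∣ i2 - (l - 2*ρ.toNat)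
        have h1 : (2*(m2:ℤ)) ∣ ((i2:ℤ) + 2*ρ) - l0 :=
          ⟨B*q, by rw [hl0def]; linear_combination hD + 2*q*bez⟩
        have h2 : (2*(m2:ℤ)) ∣ l0 - l := dvd_trans hdvd2 hNl
        have h3 := dvd_add h1 h2
        have : (i2:ℤ) - ((l:ℤ) - 2*(ρ.toNat:ℤ))
            = ((i2:ℤ) + 2*ρ) - l0 + (l0 - l) := by rw [hρcast]; ring
        rw [this]; exact h3
    · rintro ⟨ρ, hρ, l, hl, rfl⟩
      rw [lissajous_eq_V m1 m2 hm1 hm2]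
      set a : ℕ := l % (2*m1) with hadef
      have halt : a < 2*m1 := Nat.mod_lt _ (by omega)
      have hla : (2*(m1:ℤ)) ∣ (l:ℤ) - a := by
        have : (a:ℤ) = (l:ℤ) % (2*m1) := by rw [hadef]; push_cast; ring_nf
        rw [this, Int.emod_def]; push_cast; exact ⟨(l:ℤ) / (2*m1), by ring⟩
      set bz : ℤ := ((l:ℤ) - 2*ρ) % (2*m2) with hbzdef
      have hbz0 : 0 ≤ bz := Int.emod_nonneg _ (by positivity)
      have hbzlt : bz < 2*m2 := Int.emod_lt_of_pos _ (by positivity)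
      have hlb : (2*(m2:ℤ)) ∣ ((l:ℤ) - 2*ρ) - bz := by
        rw [hbzdef, Int.emod_def]; exact ⟨((l:ℤ) - 2*ρ) / (2*m2), by ring⟩
      set b : ℕ := bz.toNat with hbdef
      have hbcast : (b:ℤ) = bz := Int.toNat_of_nonneg hbz0
      have hblt : b < 2*m2 := by omega
      -- parity of a + b
      have hpar : (a + b) % 2 = 0 := by
        have e1 : (2:ℤ) ∣ (l:ℤ) - a := dvd_trans ⟨m1, rfl⟩ hla
        have e2 : (2:ℤ) ∣ ((l:ℤ) - 2*ρ) - bz := dvd_trans ⟨m2, rfl⟩ hlb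
        have : (2:ℤ) ∣ ((a:ℤ) + b) := by
          have : (a:ℤ) + b = ((l:ℤ) - ((l:ℤ) - a)) +
            (((l:ℤ) - 2*ρ) - (((l:ℤ) - 2*ρ) - bz)) := by rw [hbcast]; ring
          rw [this]
          omega
        omega
      have hVeq : V m1 m2 (l:ℤ) ((l:ℤ) - 2*ρ) = V m1 m2 (a:ℤ) bz :=
        V_congr m1 m2 hm1 hm2 hla hlb
      have hm2e : m2 % 2 = 0 := Nat.even_iff.mp heven
      by_cases hcase : a ≤ m1
      · by_cases hdeg : a = 0 ∨ a = m1
        · -- degenerate: sin factor zero, pick i2 < m2 with right parity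
          set i2 : ℕ := if b < m2 then b else b - m2 with hi2
          have hi2lt : i2 < m2 := by rw [hi2]; split <;> omega
          have hi2par : (a + i2) % 2 = 0 := by rw [hi2]; split <;> omega
          refine ⟨(a, i2), ?_, ?_⟩
          · simp only [indexSet, Finset.mem_filter, Finset.mem_product,
              Finset.mem_range]
            exact ⟨⟨by omega, by omega⟩, fun _ => hi2lt, Nat.even_iff.mpr hi2par⟩
          · rw [hVeq, node_eq_V]
            exact V_sin_zero m1 m2 hm1
              (by rcases hdeg with h | h <;> [left; right] <;> exact_mod_cast h) _ _
        · refine ⟨(a, b), ?_, ?_⟩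
          · simp only [indexSet, Finset.mem_filter, Finset.mem_product,
              Finset.mem_range]
            exact ⟨⟨by omega, hblt⟩, fun h => absurd h hdeg, Nat.even_iff.mpr hpar⟩
          · rw [hVeq, node_eq_V, hbcast]
      · -- a > m1 : flip
        push_neg at hcase
        set i1 : ℕ := 2*m1 - a with hi1
        have hi1pos : 0 < i1 := by omega
        have hi1lt : i1 < m1 := by omega
        set i2 : ℕ := if b < m2 then b + m2 else b - m2 with hi2
        have hi2lt : i2 < 2*m2 := by rw [hi2]; split <;> omega
        have hi2par : (i1 + i2) % 2 = 0 := by rw [hi2, hi1]; split <;> omega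
        refine ⟨(i1, i2), ?_, ?_⟩
        · simp only [indexSet, Finset.mem_filter, Finset.mem_product,
            Finset.mem_range]
          exact ⟨⟨by omega, hi2lt⟩, fun h => by omega, Nat.even_iff.mpr hi2par⟩
        · rw [hVeq, node_eq_V]
          have step1 : V m1 m2 (a:ℤ) bz = V m1 m2 (-(i1:ℤ)) bz :=
            V_congr m1 m2 hm1 hm2 ⟨1, by push_cast [hi1]; omega⟩ ⟨0, by ring⟩
          have step2 : V m1 m2 (-(i1:ℤ)) bz = V m1 m2 (i1:ℤ) (bz - m2) := by
            have := V_flip m1 m2 hm1 hm2 (i1:ℤ) (bz - m2)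
            rw [show (bz - (m2:ℤ)) + m2 = bz by ring] at this
            exact this
          have step3 : V m1 m2 (i1:ℤ) (bz - m2) = V m1 m2 (i1:ℤ) (i2:ℤ) := by
            apply V_congr m1 m2 hm1 hm2 ⟨0, by ring⟩
            rw [hi2]
            split
            · exact ⟨-1, by push_cast; omega⟩
            · exact ⟨0, by push_cast; omega⟩
          rw [step1, step2, step3]
  refine ⟨hmain, fun h1 => ?_⟩
  have hg1 : g = 1 := hg.trans h1
  rw [hmain]
  subst hg1
  have hNe : N = 2 * m1 * m2 := by rw [hNdef]; omega
  ext x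
  simp only [Set.mem_setOf_eq]
  constructor
  · rintro ⟨ρ, hρ, l, hl, he⟩
    have hρ0 : ρ = 0 := by omega
    subst hρ0
    refine ⟨l, by omega, ?_⟩
    simpa using he
  · rintro ⟨l, hl, he⟩
    refine ⟨0, by omega, l, by omega, ?_⟩
    simpa using he
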